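/- Let k be a key, sm a zip tree all of whose keys are smaller than k, and bg a zip tree all of whose keys are larger than k. Then zip k sm bg is a zip tree with rk (zip k sm bg) = max(rk sm, rk bg) and set (zip k sm bg) = set sm ∪ set bg. -/

import Mathlib

/-- Ranked binary trees: each node stores a natural-number rank and a key. -/
inductive ZTree (α : Type*) where
  | empty : ZTree α
  | node (rank : ℕ) (key : α) (left right : ZTree α) : ZTree α

namespace ZTree

/-- The rank of the root of a tree, with `rk empty = -1`. -/
def rk {α : Type*} : ZTree α → ℤ
  | .empty => -1
  | .node r _ _ _ => (r : ℤ)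

/-- The set of keys occurring in a tree. -/
def keys {α : Type*} : ZTree α → Set α
  | .empty => ∅
  | .node _ k l r => {k} ∪ l.keys ∪ r.keys

/-- The left child of a tree (the empty tree for the empty tree). -/
def left {α : Type*} : ZTree α → ZTree α
  | .empty => .empty
  | .node _ _ l _ => l

/-- The right child of a tree (the empty tree for the empty tree). -/
def right {α : Type*} : ZTree α → ZTree α
  | .empty => .empty
  | .node _ _ _ r => r

/-- The number of nodes of a tree. -/
def size {α : Type*} : ZTree α → ℕ
  | .empty => 0
  | .node _ _ l r => l.size + r.size + 1

/-- The zip tree invariant: binary-search-tree property on keys, the rank of a left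
child is strictly smaller than the rank of its parent, and the rank of a right child
is at most the rank of its parent. -/
def IsZipTree {α : Type*} [LinearOrder α] : ZTree α → Prop
  | .empty => True
  | .node rank k l r =>
      (∀ x ∈ l.keys, x < k) ∧ (∀ x ∈ r.keys, k < x) ∧
      l.rk < (rank : ℤ) ∧ r.rk ≤ (rank : ℤ) ∧ l.IsZipTree ∧ r.IsZipTree

/-- Zip-tree insertion. -/
def insert {α : Type*} [LinearOrder α] (r : ℕ) (k : α) : ZTree α → ZTree α
  | .empty => .node r k .empty .empty
  | .node rank key l rt =>
    if k = key then .node rank key l rt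
    else if k < key then
      match ZTree.insert r k l with
      | .empty => .node rank key .empty rt
      | .node tr tk tl trr =>
          if (tr : ℤ) < (rank : ℤ) then .node rank key (.node tr tk tl trr) rt
          else .node tr tk tl (.node rank key trr rt)
    else
      match ZTree.insert r k rt with
      | .empty => .node rank key l .empty
      | .node tr tk tl trr =>
          if (tr : ℤ) ≤ (rank : ℤ) then .node rank key l (.node tr tk tl trr)
          else .node tr tk (.node rank key l tl) trr

/-- Zipping two trees. -/
def zip {α : Type*} (k : α) : ZTree α → ZTree α → ZTree α
  | .empty, .empty => .empty
  | .empty, t => t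
  | t, .empty => t
  | .node r1 k1 l1 rt1, .node r2 k2 l2 rt2 =>
    if r1 < r2 then
      .node r2 k2 (ZTree.zip k (.node r1 k1 l1 rt1) l2) rt2
    else
      .node r1 k1 l1 (ZTree.zip k rt1 (.node r2 k2 l2 rt2))
  termination_by t1 t2 => t1.size + t2.size
  decreasing_by
    · simp [ZTree.size]
    · simp [ZTree.size]

/-- Zip-tree deletion. -/
def delete {α : Type*} [LinearOrder α] (k : α) : ZTree α → ZTree α
  | .empty => .empty
  | .node rank key l r =>
    if k < key then .node rank key (ZTree.delete k l) r
    else if key < k then .node rank key l (ZTree.delete k r)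
    else ZTree.zip k l r

end ZTree

theorem zip_correct {α : Type*} [LinearOrder α] (k : α) (sm bg : ZTree α)
    (hsm : sm.IsZipTree) (hbg : bg.IsZipTree)
    (hsmk : ∀ x ∈ sm.keys, x < k) (hbgk : ∀ x ∈ bg.keys, k < x) :
    (ZTree.zip k sm bg).IsZipTree ∧
    (ZTree.zip k sm bg).rk = max sm.rk bg.rk ∧
    (ZTree.zip k sm bg).keys = sm.keys ∪ bg.keys := by
    induction sm, bg using ZTree.zip.induct with
  | case1 => refine ⟨?_, by simp [ZTree.zip, ZTree.rk], by simp [ZTree.zip, ZTree.keys]⟩; simp [ZTree.zip, ZTree.IsZipTree]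
  | case2 t h =>
      cases t with
      | empty => exact absurd rfl h
      | node r key l rt =>
        exact ⟨by simpa [ZTree.zip] using hbg, by simp [ZTree.zip, ZTree.rk], by simp [ZTree.zip, ZTree.keys]⟩
  | case3 t h =>
      cases t with
      | empty => exact absurd rfl h
      | node r key l rt =>
        exact ⟨by simpa [ZTree.zip] using hsm, by simp [ZTree.zip, ZTree.rk], by simp [ZTree.zip, ZTree.keys]⟩
  | case4 r1 k1 l1 rt1 r2 k2 l2 rt2 hlt ih =>
      obtain ⟨h1, h2, h3, h4, h5, h6⟩ := hbg
      have hk2 : k < k2 := hbgk k2 (by simp [ZTree.keys])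
      obtain ⟨zh1, zh2, zh3⟩ := ih hsm h5 hsmk
        (fun x hx => hbgk x (by simp [ZTree.keys]; tauto))
      simp only [ZTree.zip, if_pos hlt]
      refine ⟨⟨?_, h2, ?_, h4, zh1, h6⟩, ?_, ?_⟩
      · intro x hx
        rw [zh3] at hx
        rcases hx with hx | hx
        · exact (hsmk x hx).trans hk2
        · exact h1 x hx
      · rw [zh2]
        simp only [ZTree.rk, sup_lt_iff]
        exact ⟨by exact_mod_cast hlt, h3⟩
      · simp only [ZTree.rk]
        rw [max_eq_right (by exact_mod_cast hlt.le)]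
      · rw [ZTree.keys, zh3]
        ext x
        simp [ZTree.keys]
        tauto
  | case5 r1 k1 l1 rt1 r2 k2 l2 rt2 hlt ih =>
      obtain ⟨h1, h2, h3, h4, h5, h6⟩ := hsm
      have hk1 : k1 < k := hsmk k1 (by simp [ZTree.keys])
      obtain ⟨zh1, zh2, zh3⟩ := ih h6 hbg
        (fun x hx => hsmk x (by simp [ZTree.keys]; tauto)) hbgk
      simp only [ZTree.zip, if_neg hlt]
      have hr : (r2 : ℤ) ≤ (r1 : ℤ) := by exact_mod_cast Nat.le_of_not_lt hlt
      refine ⟨⟨h1, ?_, h3, ?_, h5, zh1⟩, ?_, ?_⟩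
      · intro x hx
        rw [zh3] at hx
        rcases hx with hx | hx
        · exact h2 x hx
        · exact hk1.trans (hbgk x hx)
      · rw [zh2]
        simp only [ZTree.rk, sup_le_iff]
        exact ⟨h4, hr⟩
      · simp only [ZTree.rk]
        rw [max_eq_left hr]
      · rw [ZTree.keys, zh3]
        ext x
        simp [ZTree.keys]
        tauto
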